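/- Let a_1,…,a_m be nonzero vectors in ℂ^d. For i = 1,…,c let w_i > 0 with Σ_{i=1}^{c} w_i = 1; let R_i be a finite composition of relaxed projections P_{a_v}^{ω_v} with indices v drawn from a list L_i ⊆ {1,…,m} and relaxation parameters ω_v ∈ (0,2); let G_i ⊆ {1,…,m}, α_i < 1, and let C_i be a linear operator on ℂ^d such that C_i x = x whenever ⟨x, a_u⟩ = 0 for all u ∈ G_i, C_i maps H_i := span{a_u : u ∈ G_i} into itself, and ‖C_i x‖ ≤ α_i ‖x‖ for every x ∈ H_i. Assume every index j ∈ {1,…,m} occurs in some list L_i or belongs to some set G_i, and set T = Σ_{i=1}^{c} w_i (C_i ∘ R_i). Then the kernel of I − T equals {x ∈ ℂ^d : ⟨x, a_j⟩ = 0 for all j = 1,…,m}, i.e., the null space of the matrix whose rows are a_1*,…,a_m*. -/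

import Mathlib

/-- The relaxed projection `P_a^ω x = x - ω (⟨x,a⟩/‖a‖²) a` associated to a vector `a ∈ ℂ^d`
and a real relaxation parameter `ω`. -/
noncomputable def relaxProj {d : ℕ} (a : EuclideanSpace ℂ (Fin d)) (ω : ℝ)
    (x : EuclideanSpace ℂ (Fin d)) : EuclideanSpace ℂ (Fin d) :=
  x - ((ω : ℂ) * ((inner ℂ a x : ℂ) / (‖a‖ : ℂ) ^ 2)) • a

lemma relaxProj_norm_sq {d : ℕ} {a : EuclideanSpace ℂ (Fin d)} (ha : a ≠ 0) (ω : ℝ)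
    (x : EuclideanSpace ℂ (Fin d)) :
    ‖relaxProj a ω x‖^2 = ‖x‖^2 - ω * (2 - ω) * ‖(inner ℂ a x : ℂ)‖^2 / ‖a‖^2 := by
  have hn : ‖a‖ ≠ 0 := norm_ne_zero_iff.mpr ha
  set s : ℂ := (inner ℂ a x : ℂ) with hs
  set cc : ℂ := (ω : ℂ) * (s / (‖a‖ : ℂ) ^ 2) with hcc
  have h1 : ‖relaxProj a ω x‖^2
      = ‖x‖^2 - 2 * RCLike.re (inner ℂ x (cc • a) : ℂ) + ‖cc • a‖^2 := by
    rw [relaxProj]; exact norm_sub_sq _ _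
  have h2 : (inner ℂ x (cc • a) : ℂ) = cc * (starRingEnd ℂ) s := by
    rw [inner_smul_right, inner_conj_symm]
  have hsc : s * (starRingEnd ℂ) s = ((‖s‖ : ℝ) : ℂ)^2 := by
    rw [Complex.mul_conj, Complex.normSq_eq_norm_sq]; push_cast; ring
  have hnc : ((‖a‖ : ℝ) : ℂ) ≠ 0 := by exact_mod_cast hn
  have hss : ‖s‖ = ‖s‖ := rfl
  have h3 : cc * (starRingEnd ℂ) s = ((ω * ‖s‖^2 / ‖a‖^2 : ℝ) : ℂ) := by
    rw [hcc, hss]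
    push_cast
    field_simp
    linear_combination (ω : ℂ) * hsc
  have h4 : ‖cc • a‖^2 = ω^2 * ‖s‖^2 / ‖a‖^2 := by
    rw [norm_smul, hcc]
    have : ‖(ω : ℂ) * (s / (‖a‖ : ℂ) ^ 2)‖ = |ω| * (‖s‖ / ‖a‖^2) := by
      rw [norm_mul, norm_div]
      norm_num [Complex.norm_real]
    rw [this, mul_pow, mul_pow, div_pow, sq_abs]
    field_simp
  rw [h1, h2, h3, h4]
  have h5 : RCLike.re (((ω * ‖s‖^2 / ‖a‖^2 : ℝ)) : ℂ) = ω * ‖s‖^2 / ‖a‖^2 :=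
    RCLike.ofReal_re _
  rw [h5]
  field_simp
  ring

lemma relaxProj_of_inner_zero {d : ℕ} (a : EuclideanSpace ℂ (Fin d)) (ω : ℝ)
    (x : EuclideanSpace ℂ (Fin d)) (h : (inner ℂ a x : ℂ) = 0) : relaxProj a ω x = x := by
  simp [relaxProj, h]

lemma relaxProj_norm_le {d : ℕ} {a : EuclideanSpace ℂ (Fin d)} (ha : a ≠ 0) {ω : ℝ}
    (hω : ω ∈ Set.Ioo (0:ℝ) 2) (x : EuclideanSpace ℂ (Fin d)) :
    ‖relaxProj a ω x‖ ≤ ‖x‖ := by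
  have h := relaxProj_norm_sq ha ω x
  have h1 : 0 ≤ ω * (2 - ω) * ‖(inner ℂ a x : ℂ)‖^2 / ‖a‖^2 := by
    apply div_nonneg
    · apply mul_nonneg (by nlinarith [hω.1, hω.2]) (sq_nonneg _)
    · positivity
  nlinarith [norm_nonneg (relaxProj a ω x), norm_nonneg x]

lemma relaxProj_inner_zero_of_norm_ge {d : ℕ} {a : EuclideanSpace ℂ (Fin d)} (ha : a ≠ 0)
    {ω : ℝ} (hω : ω ∈ Set.Ioo (0:ℝ) 2) (x : EuclideanSpace ℂ (Fin d))
    (hx : ‖x‖ ≤ ‖relaxProj a ω x‖) : (inner ℂ a x : ℂ) = 0 := by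
  have h := relaxProj_norm_sq ha ω x
  have hna' : (0:ℝ) < ‖a‖ := norm_pos_iff.mpr ha
  have hna : (0:ℝ) < ‖a‖^2 := by positivity
  have hωpos : 0 < ω * (2 - ω) := by nlinarith [hω.1, hω.2]
  have : ‖(inner ℂ a x : ℂ)‖^2 ≤ 0 := by
    have h2 : ω * (2 - ω) * ‖(inner ℂ a x : ℂ)‖^2 / ‖a‖^2 ≤ 0 := by
      nlinarith [norm_nonneg (relaxProj a ω x), norm_nonneg x]
    by_contra hc
    push_neg at hc
    have : 0 < ω * (2 - ω) * ‖(inner ℂ a x : ℂ)‖^2 / ‖a‖^2 := by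
      apply div_pos (mul_pos hωpos hc) hna
    linarith
  have : ‖(inner ℂ a x : ℂ)‖ = 0 := by nlinarith [norm_nonneg (inner ℂ a x : ℂ)]
  exact norm_eq_zero.mp this

section fold
variable {d m : ℕ} (a : Fin m → EuclideanSpace ℂ (Fin d)) (ω : Fin m → ℝ)

lemma foldl_norm_le (ha : ∀ j, a j ≠ 0) :
    ∀ (L : List (Fin m)), (∀ v ∈ L, ω v ∈ Set.Ioo (0:ℝ) 2) →
    ∀ x, ‖L.foldl (fun y v => relaxProj (a v) (ω v) y) x‖ ≤ ‖x‖ := by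
  intro L
  induction L with
  | nil => intro _ x; simp
  | cons v rest ih =>
    intro hmem x
    simp only [List.foldl_cons]
    calc ‖rest.foldl (fun y v => relaxProj (a v) (ω v) y) (relaxProj (a v) (ω v) x)‖
        ≤ ‖relaxProj (a v) (ω v) x‖ :=
          ih (fun u hu => hmem u (List.mem_cons_of_mem _ hu)) _
      _ ≤ ‖x‖ := relaxProj_norm_le (ha v) (hmem v (List.mem_cons_self)) x

lemma foldl_fix :
    ∀ (L : List (Fin m)) x, (∀ v ∈ L, (inner ℂ (a v) x : ℂ) = 0) →
    L.foldl (fun y v => relaxProj (a v) (ω v) y) x = x := by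
  intro L
  induction L with
  | nil => intro x _; simp
  | cons v rest ih =>
    intro x hmem
    simp only [List.foldl_cons]
    rw [relaxProj_of_inner_zero _ _ _ (hmem v (List.mem_cons_self))]
    exact ih x (fun u hu => hmem u (List.mem_cons_of_mem _ hu))

lemma foldl_of_norm_ge (ha : ∀ j, a j ≠ 0) :
    ∀ (L : List (Fin m)), (∀ v ∈ L, ω v ∈ Set.Ioo (0:ℝ) 2) →
    ∀ x, ‖x‖ ≤ ‖L.foldl (fun y v => relaxProj (a v) (ω v) y) x‖ →
    ∀ v ∈ L, (inner ℂ (a v) x : ℂ) = 0 := by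
  intro L
  induction L with
  | nil => intro _ x _ v hv; simp at hv
  | cons v rest ih =>
    intro hmem x hx
    have hv2 := hmem v (List.mem_cons_self)
    have hrest : ∀ u ∈ rest, ω u ∈ Set.Ioo (0:ℝ) 2 :=
      fun u hu => hmem u (List.mem_cons_of_mem _ hu)
    simp only [List.foldl_cons] at hx
    have h1 : ‖rest.foldl (fun y v => relaxProj (a v) (ω v) y) (relaxProj (a v) (ω v) x)‖
        ≤ ‖relaxProj (a v) (ω v) x‖ := foldl_norm_le a ω ha rest hrest _
    have h2 : ‖x‖ ≤ ‖relaxProj (a v) (ω v) x‖ := le_trans hx h1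
    have hz : (inner ℂ (a v) x : ℂ) = 0 := relaxProj_inner_zero_of_norm_ge (ha v) hv2 x h2
    have hfix : relaxProj (a v) (ω v) x = x := relaxProj_of_inner_zero _ _ _ hz
    rw [hfix] at hx
    intro u hu
    rcases List.mem_cons.mp hu with h | h
    · rw [h]; exact hz
    · exact ih hrest x hx u h

end fold


lemma C_aux {d m : ℕ} (a : Fin m → EuclideanSpace ℂ (Fin d)) (G : Set (Fin m))
    {α : ℝ} (hα : α < 1)
    (C : EuclideanSpace ℂ (Fin d) →ₗ[ℂ] EuclideanSpace ℂ (Fin d))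
    (hCfix : ∀ x, (∀ u ∈ G, (inner ℂ (a u) x : ℂ) = 0) → C x = x)
    (hCinv : ∀ x ∈ Submodule.span ℂ (a '' G), C x ∈ Submodule.span ℂ (a '' G))
    (hCcon : ∀ x ∈ Submodule.span ℂ (a '' G), ‖C x‖ ≤ α * ‖x‖)
    (x : EuclideanSpace ℂ (Fin d)) :
    ‖C x‖ ≤ ‖x‖ ∧ (‖x‖ ≤ ‖C x‖ → ∀ u ∈ G, (inner ℂ (a u) x : ℂ) = 0) := by
  set H := Submodule.span ℂ (a '' G) with hH
  set p : EuclideanSpace ℂ (Fin d) := (H.orthogonalProjectionOnto x : EuclideanSpace ℂ (Fin d)) with hp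
  set q : EuclideanSpace ℂ (Fin d) := x - p with hqdef
  have hpH : p ∈ H := (H.orthogonalProjectionOnto x).2
  have hqo : q ∈ Hᗮ := H.sub_starProjection_mem_orthogonal x
  have hq0 : ∀ u ∈ G, (inner ℂ (a u) q : ℂ) = 0 := fun u hu =>
    (Submodule.mem_orthogonal H q).mp hqo _ (Submodule.subset_span ⟨u, hu, rfl⟩)
  have hCq : C q = q := hCfix q hq0
  have hx : x = p + q := by rw [hqdef]; abel
  have hCx : C x = C p + q := by rw [hx, map_add, hCq]
  have hCpH : C p ∈ H := hCinv p hpH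
  have hio : (inner ℂ (C p) q : ℂ) = 0 := (Submodule.mem_orthogonal H q).mp hqo _ hCpH
  have hio2 : (inner ℂ p q : ℂ) = 0 := (Submodule.mem_orthogonal H q).mp hqo _ hpH
  have hCnorm : ‖C x‖^2 = ‖C p‖^2 + ‖q‖^2 := by
    have h := @norm_add_sq ℂ _ _ _ _ (C p) q
    rw [hio] at h
    rw [hCx]
    simpa using h
  have hxnorm : ‖x‖^2 = ‖p‖^2 + ‖q‖^2 := by
    have h := @norm_add_sq ℂ _ _ _ _ p q
    rw [hio2] at h
    rw [hx]
    simpa using h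
  set α' : ℝ := max α 0 with hα'
  have hα'0 : 0 ≤ α' := le_max_right _ _
  have hα'1 : α' < 1 := max_lt hα one_pos
  have hCp_le : ‖C p‖ ≤ α' * ‖p‖ :=
    le_trans (hCcon p hpH) (mul_le_mul_of_nonneg_right (le_max_left _ _) (norm_nonneg _))
  clear hp hqdef
  clear_value p q
  have hCp_sq : ‖C p‖^2 ≤ α'^2 * ‖p‖^2 := by
    have h := pow_le_pow_left₀ (norm_nonneg (C p)) hCp_le 2
    rwa [mul_pow] at h
  have hα'sq : α'^2 ≤ 1 := by nlinarith
  have h1' : α'^2 * ‖p‖^2 ≤ ‖p‖^2 :=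
    mul_le_of_le_one_left (sq_nonneg _) hα'sq
  constructor
  · have hsq : ‖C x‖^2 ≤ ‖x‖^2 := by linarith
    exact (pow_le_pow_iff_left₀ (norm_nonneg _) (norm_nonneg _) two_ne_zero).mp hsq
  · intro hge u hu
    have h2 : ‖x‖^2 ≤ ‖C x‖^2 := pow_le_pow_left₀ (norm_nonneg _) hge 2
    have hple : ‖p‖^2 ≤ α'^2 * ‖p‖^2 := by linarith
    have hα'lt : α'^2 < 1 := by nlinarith
    have hp2 : ‖p‖^2 ≤ 0 := by
      by_contra hcon
      push_neg at hcon
      have h4 : α'^2 * ‖p‖^2 < 1 * ‖p‖^2 := mul_lt_mul_of_pos_right hα'lt hcon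
      linarith
    have hp0 : p = 0 := by
      have h3 : ‖p‖^2 = 0 := le_antisymm hp2 (sq_nonneg _)
      exact norm_eq_zero.mp (pow_eq_zero_iff two_ne_zero |>.mp h3)
    have hxq : x = q := by rw [hx, hp0, zero_add]
    rw [hxq]; exact hq0 u hu

/-- With `T = Σ_i w_i (C_i ∘ R_i)` built from compositions `R_i` of relaxed
projections (parameters in `(0,2)`) along lists `L_i` and operators `C_i` fixing
`{a_u : u ∈ G_i}ᗮ`, leaving `H_i = span{a_u : u ∈ G_i}` invariant and `α_i`-contractive on it,
where the lists and sets together cover all indices: the kernel of `I - T` equals the null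
space `{x : ⟨x, a_j⟩ = 0 for all j}` of the matrix with rows `a_1*, …, a_m*`. -/
theorem stmt_9 {d m c : ℕ} (a : Fin m → EuclideanSpace ℂ (Fin d)) (ha : ∀ j, a j ≠ 0)
    (w : Fin c → ℝ) (hw : ∀ i, 0 < w i) (hw1 : ∑ i, w i = 1)
    (L : Fin c → List (Fin m)) (ω : Fin m → ℝ)
    (hω : ∀ i, ∀ v ∈ L i, ω v ∈ Set.Ioo (0 : ℝ) 2)
    (R : Fin c → EuclideanSpace ℂ (Fin d) → EuclideanSpace ℂ (Fin d))
    (hR : ∀ i x, R i x = (L i).foldl (fun y v => relaxProj (a v) (ω v) y) x)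
    (G : Fin c → Set (Fin m)) (α : Fin c → ℝ) (hα : ∀ i, α i < 1)
    (C : Fin c → (EuclideanSpace ℂ (Fin d) →ₗ[ℂ] EuclideanSpace ℂ (Fin d)))
    (hCfix : ∀ i x, (∀ u ∈ G i, (inner ℂ (a u) x : ℂ) = 0) → C i x = x)
    (hCinv : ∀ i, ∀ x ∈ Submodule.span ℂ (a '' G i), C i x ∈ Submodule.span ℂ (a '' G i))
    (hCcon : ∀ i, ∀ x ∈ Submodule.span ℂ (a '' G i), ‖C i x‖ ≤ α i * ‖x‖)
    (hcover : ∀ j : Fin m, (∃ i, j ∈ L i) ∨ (∃ i, j ∈ G i))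
    (T : EuclideanSpace ℂ (Fin d) → EuclideanSpace ℂ (Fin d))
    (hT : ∀ x, T x = ∑ i, w i • C i (R i x)) :
    {x : EuclideanSpace ℂ (Fin d) | x - T x = 0} =
      {x : EuclideanSpace ℂ (Fin d) | ∀ j, (inner ℂ (a j) x : ℂ) = 0} := by
  ext x
  simp only [Set.mem_setOf_eq]
  constructor
  · intro hx
    have hxT : x = T x := by rwa [sub_eq_zero] at hx
    have hCle : ∀ i y, ‖C i y‖ ≤ ‖y‖ := fun i y =>
      (C_aux a (G i) (hα i) (C i) (hCfix i) (hCinv i) (hCcon i) y).1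
    have hRle : ∀ i, ‖R i x‖ ≤ ‖x‖ := fun i => by
      rw [hR]; exact foldl_norm_le a ω ha (L i) (hω i) x
    have hu_le : ∀ i, ‖C i (R i x)‖ ≤ ‖x‖ := fun i =>
      le_trans (hCle i _) (hRle i)
    have hsum : ‖x‖ ≤ ∑ i, w i * ‖C i (R i x)‖ := by
      have hxT' : x = ∑ i, w i • C i (R i x) := hxT.trans (hT x)
      calc ‖x‖ = ‖∑ i, w i • C i (R i x)‖ := congrArg norm hxT'
        _ ≤ ∑ i, ‖w i • C i (R i x)‖ := norm_sum_le _ _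
        _ = ∑ i, w i * ‖C i (R i x)‖ := by
            apply Finset.sum_congr rfl
            intro i _
            rw [norm_smul, Real.norm_eq_abs, abs_of_pos (hw i)]
    have heq : ∀ i, ‖x‖ ≤ ‖C i (R i x)‖ := by
      intro i
      by_contra hcon
      push_neg at hcon
      have hlt : ∑ j, w j * ‖C j (R j x)‖ < ∑ j, w j * ‖x‖ := by
        apply Finset.sum_lt_sum
        · intro j _
          exact mul_le_mul_of_nonneg_left (hu_le j) (hw j).le
        · exact ⟨i, Finset.mem_univ i, mul_lt_mul_of_pos_left hcon (hw i)⟩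
      rw [← Finset.sum_mul, hw1, one_mul] at hlt
      linarith
    have hRfix : ∀ i, R i x = x ∧ ∀ v ∈ L i, (inner ℂ (a v) x : ℂ) = 0 := by
      intro i
      have hxle : ‖x‖ ≤ ‖R i x‖ := le_trans (heq i) (hCle i _)
      have hzero : ∀ v ∈ L i, (inner ℂ (a v) x : ℂ) = 0 := by
        rw [hR i x] at hxle
        exact foldl_of_norm_ge a ω ha (L i) (hω i) x hxle
      refine ⟨?_, hzero⟩
      rw [hR]
      exact foldl_fix a ω (L i) x hzero
    intro j
    rcases hcover j with ⟨i, hij⟩ | ⟨i, hij⟩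
    · exact (hRfix i).2 j hij
    · have hge : ‖x‖ ≤ ‖C i x‖ := by
        have h := heq i
        rwa [(hRfix i).1] at h
      exact (C_aux a (G i) (hα i) (C i) (hCfix i) (hCinv i) (hCcon i) x).2 hge j hij
  · intro hx
    have hRx : ∀ i, R i x = x := fun i => by
      rw [hR]; exact foldl_fix a ω (L i) x (fun v _ => hx v)
    have hCx : ∀ i, C i x = x := fun i => hCfix i x (fun u _ => hx u)
    rw [hT]
    have hsum : ∑ i, w i • C i (R i x) = ∑ i, w i • x := by
      apply Finset.sum_congr rfl
      intro i _
      rw [hRx, hCx]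
    rw [hsum, ← Finset.sum_smul, hw1, one_smul, sub_self]
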